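/- Estimated variance error bound: under the stated hypotheses, |clip_{[0,H²]}(⟨ψ, θ̃⟩) − ⟨ψ, θ*⟩ + ⟨φ, θ*⟩² − (clip_{[0,H]}(⟨φ, θ̂⟩))²| ≤ min{H², ‖Σ̃^{-1/2} ψ‖₂ · ‖Σ̃^{1/2}(θ̃ − θ*)‖₂} + min{H², 2H·‖Σ̂^{-1/2} φ‖₂ · ‖Σ̂^{1/2}(θ̂ − θ*)‖₂}. -/

import Mathlib

open Matrix

open scoped ComplexOrder in
/-- The square root of a positive semidefinite matrix (the definition of `Matrix.PosSemidef.sqrt`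
in the older Mathlib, which has since been removed). -/
noncomputable def Matrix.PosSemidef.sqrt {n 𝕜 : Type*} [Fintype n] [DecidableEq n] [RCLike 𝕜]
    {A : Matrix n n 𝕜} (hA : A.PosSemidef) : Matrix n n 𝕜 :=
  hA.1.eigenvectorUnitary.1 * diagonal ((↑) ∘ Real.sqrt ∘ hA.1.eigenvalues) *
    (star hA.1.eigenvectorUnitary : Matrix n n 𝕜)

/-- Truncation of `x` to the interval `[a, b]`. -/
noncomputable def clip (a b x : ℝ) : ℝ := min (max x a) b

/-- The Euclidean norm `‖v‖₂ = √(v ⬝ᵥ v)`. -/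
noncomputable def enorm2 {d : ℕ} (v : Fin d → ℝ) : ℝ := Real.sqrt (v ⬝ᵥ v)

lemma enorm2_nonneg {d : ℕ} (v : Fin d → ℝ) : 0 ≤ enorm2 v := Real.sqrt_nonneg _

/-- Cauchy–Schwarz for the dot product. -/
lemma abs_dot_le {d : ℕ} (u v : Fin d → ℝ) : |u ⬝ᵥ v| ≤ enorm2 u * enorm2 v := by
  have h := Finset.sum_mul_sq_le_sq_mul_sq Finset.univ u v
  have hu : (0:ℝ) ≤ u ⬝ᵥ u := Finset.sum_nonneg fun i _ => mul_self_nonneg _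
  rw [enorm2, enorm2, ← Real.sqrt_mul hu, ← Real.sqrt_sq_eq_abs]
  apply Real.sqrt_le_sqrt
  simpa [dotProduct, sq] using h

lemma psd_sqrt_transpose {d : ℕ} {A : Matrix (Fin d) (Fin d) ℝ} (hA : A.PosSemidef) :
    (hA.sqrt)ᵀ = hA.sqrt := by
  unfold Matrix.PosSemidef.sqrt
  simp only [Matrix.transpose_mul, star_eq_conjTranspose, conjTranspose_eq_transpose_of_trivial,
    transpose_transpose, diagonal_transpose, Matrix.mul_assoc]

lemma psd_sqrt_mul_self {d : ℕ} {A : Matrix (Fin d) (Fin d) ℝ} (hA : A.PosSemidef) :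
    hA.sqrt * hA.sqrt = A := by
  unfold Matrix.PosSemidef.sqrt
  have hU : (star hA.1.eigenvectorUnitary : Matrix (Fin d) (Fin d) ℝ) * hA.1.eigenvectorUnitary.1 = 1 :=
    by simp
  have hD : diagonal ((RCLike.ofReal : ℝ → ℝ) ∘ Real.sqrt ∘ hA.1.eigenvalues) * diagonal ((RCLike.ofReal : ℝ → ℝ) ∘ Real.sqrt ∘ hA.1.eigenvalues)
      = diagonal (RCLike.ofReal ∘ hA.1.eigenvalues) := by
    rw [diagonal_mul_diagonal]
    congr 1; funext i
    simp [Real.mul_self_sqrt (hA.eigenvalues_nonneg i)]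
  conv_rhs => rw [hA.1.spectral_theorem, Unitary.conjStarAlgAut_apply]
  rw [← hD]
  simp only [Matrix.mul_assoc]
  rw [← Matrix.mul_assoc (star _ : Matrix (Fin d) (Fin d) ℝ) _ (diagonal _ * _), hU, Matrix.one_mul]

/-- Factorization through the square root of a positive definite matrix. -/
lemma dot_factor {d : ℕ} (A : Matrix (Fin d) (Fin d) ℝ) (hA : A.PosDef) (w v : Fin d → ℝ) :
    w ⬝ᵥ v = ((hA.posSemidef.sqrt)⁻¹ *ᵥ w) ⬝ᵥ (hA.posSemidef.sqrt *ᵥ v) := by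
  set S := hA.posSemidef.sqrt with hS
  have hsym : Sᵀ = S := psd_sqrt_transpose hA.posSemidef
  have hdet : IsUnit S.det := by
    have hmul : S.det * S.det = A.det := by
      rw [← det_mul, psd_sqrt_mul_self hA.posSemidef]
    have hpos := hA.det_pos
    refine isUnit_iff_ne_zero.2 fun h0 => ?_
    rw [h0, mul_zero] at hmul
    linarith
  rw [dotProduct_mulVec]
  have : (S⁻¹ *ᵥ w) ᵥ* S = w := by
    rw [← mulVec_transpose, hsym, mulVec_mulVec, Matrix.mul_nonsing_inv _ hdet, one_mulVec]
  rw [this]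

/-- Clipping to an interval containing `x` does not increase the distance to `x`. -/
lemma clip_lip (a b x y : ℝ) (hab : a ≤ b) (hax : a ≤ x) (hxb : x ≤ b) :
    |clip a b y - x| ≤ |y - x| := by
  unfold clip
  rcases le_total y a with h | h
  · rw [max_eq_right h, min_eq_left hab, abs_sub_comm, abs_of_nonneg (by linarith),
      abs_sub_comm, abs_of_nonneg (by linarith)]
    linarith
  · rw [max_eq_left h]
    rcases le_total y b with h' | h'
    · rw [min_eq_left h']
    · rw [min_eq_right h', abs_of_nonneg (by linarith), abs_of_nonneg (by linarith)]
      linarith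

lemma clip_mem (a b y : ℝ) (hab : a ≤ b) : a ≤ clip a b y ∧ clip a b y ≤ b := by
  unfold clip
  exact ⟨le_min (le_max_right _ _) hab, min_le_right _ _⟩

/-- Estimated variance error bound (Lemma on the difference between the estimated and the
true variance of the value function). -/
theorem statement7 {d : ℕ} (H : ℝ) (hH : 0 < H)
    (Sh St : Matrix (Fin d) (Fin d) ℝ) (hSh : Sh.PosDef) (hSt : St.PosDef)
    (θs θh θt φ ψ : Fin d → ℝ)
    (hψ0 : 0 ≤ ψ ⬝ᵥ θs) (hψH : ψ ⬝ᵥ θs ≤ H ^ 2)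
    (hφ0 : 0 ≤ φ ⬝ᵥ θs) (hφH : φ ⬝ᵥ θs ≤ H) :
    |clip 0 (H ^ 2) (ψ ⬝ᵥ θt) - ψ ⬝ᵥ θs + (φ ⬝ᵥ θs) ^ 2 - clip 0 H (φ ⬝ᵥ θh) ^ 2| ≤
      min (H ^ 2)
          (enorm2 ((hSt.posSemidef.sqrt)⁻¹ *ᵥ ψ) * enorm2 (hSt.posSemidef.sqrt *ᵥ (θt - θs))) +
        min (H ^ 2)
          (2 * H * enorm2 ((hSh.posSemidef.sqrt)⁻¹ *ᵥ φ) *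
            enorm2 (hSh.posSemidef.sqrt *ᵥ (θh - θs))) := by
  have hH2 : (0:ℝ) ≤ H ^ 2 := by positivity
  -- clipped quantities
  obtain ⟨hc1a, hc1b⟩ := clip_mem 0 (H ^ 2) (ψ ⬝ᵥ θt) hH2
  obtain ⟨hc2a, hc2b⟩ := clip_mem 0 H (φ ⬝ᵥ θh) hH.le
  set c1 := clip 0 (H ^ 2) (ψ ⬝ᵥ θt)
  set c2 := clip 0 H (φ ⬝ᵥ θh)
  -- first term bound
  have hψdot : ψ ⬝ᵥ θt - ψ ⬝ᵥ θs = ψ ⬝ᵥ (θt - θs) := (dotProduct_sub ψ θt θs).symm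
  have hT1 : |c1 - ψ ⬝ᵥ θs| ≤
      min (H ^ 2)
        (enorm2 ((hSt.posSemidef.sqrt)⁻¹ *ᵥ ψ) * enorm2 (hSt.posSemidef.sqrt *ᵥ (θt - θs))) := by
    refine le_min ?_ ?_
    · rw [abs_sub_le_iff]; constructor <;> linarith
    · calc |c1 - ψ ⬝ᵥ θs| ≤ |ψ ⬝ᵥ θt - ψ ⬝ᵥ θs| :=
            clip_lip 0 (H ^ 2) (ψ ⬝ᵥ θs) (ψ ⬝ᵥ θt) hH2 hψ0 hψH
        _ = |ψ ⬝ᵥ (θt - θs)| := by rw [hψdot]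
        _ ≤ _ := by rw [dot_factor St hSt ψ (θt - θs)]; exact abs_dot_le _ _
  -- second term bound
  have hφlip : |c2 - φ ⬝ᵥ θs| ≤ |φ ⬝ᵥ θh - φ ⬝ᵥ θs| :=
    clip_lip 0 H (φ ⬝ᵥ θs) (φ ⬝ᵥ θh) hH.le hφ0 hφH
  have hφdot : |φ ⬝ᵥ θh - φ ⬝ᵥ θs| ≤
      enorm2 ((hSh.posSemidef.sqrt)⁻¹ *ᵥ φ) * enorm2 (hSh.posSemidef.sqrt *ᵥ (θh - θs)) := by
    have : φ ⬝ᵥ θh - φ ⬝ᵥ θs = φ ⬝ᵥ (θh - θs) := (dotProduct_sub φ θh θs).symm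
    rw [this, dot_factor Sh hSh φ (θh - θs)]
    exact abs_dot_le _ _
  have hT2 : |(φ ⬝ᵥ θs) ^ 2 - c2 ^ 2| ≤
      min (H ^ 2)
        (2 * H * enorm2 ((hSh.posSemidef.sqrt)⁻¹ *ᵥ φ) *
          enorm2 (hSh.posSemidef.sqrt *ᵥ (θh - θs))) := by
    refine le_min ?_ ?_
    · rw [abs_sub_le_iff]; constructor <;> nlinarith
    · have h1 : |(φ ⬝ᵥ θs) ^ 2 - c2 ^ 2| ≤ 2 * H * |c2 - φ ⬝ᵥ θs| := by
        rcases abs_cases (c2 - φ ⬝ᵥ θs) with ⟨he, _⟩ | ⟨he, _⟩ <;>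
          rw [he] <;> rw [abs_le] <;> constructor <;> nlinarith
      have h2 : 2 * H * |c2 - φ ⬝ᵥ θs| ≤
          2 * H * (enorm2 ((hSh.posSemidef.sqrt)⁻¹ *ᵥ φ) *
            enorm2 (hSh.posSemidef.sqrt *ᵥ (θh - θs))) := by
        apply mul_le_mul_of_nonneg_left (hφlip.trans hφdot) (by positivity)
      calc |(φ ⬝ᵥ θs) ^ 2 - c2 ^ 2| ≤ _ := h1
        _ ≤ _ := h2
        _ = _ := by ring
  calc |c1 - ψ ⬝ᵥ θs + (φ ⬝ᵥ θs) ^ 2 - c2 ^ 2|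
      = |(c1 - ψ ⬝ᵥ θs) + ((φ ⬝ᵥ θs) ^ 2 - c2 ^ 2)| := by ring_nf
    _ ≤ |c1 - ψ ⬝ᵥ θs| + |(φ ⬝ᵥ θs) ^ 2 - c2 ^ 2| := abs_add_le _ _
    _ ≤ _ := add_le_add hT1 hT2
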